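/- Let a_1,...,a_m be transpositions a_i = (α_i, 2n+1) in S_{2n+1} whose associated equality partition π lies in NC_{1,2}(m). If π has no singleton blocks that are non-inner (i.e., every singleton block is an inner block of some two-element block), then 2n+1 is a fixed point of the product a_1 a_2 ⋯ a_m. -/

import Mathlib

namespace JM

/-- A collection of sets is a partition of `Fin m`. -/
def IsPartitionOn {m : ℕ} (π : Set (Set (Fin m))) : Prop :=
  (∀ B ∈ π, B.Nonempty) ∧ (∀ x : Fin m, ∃ B ∈ π, x ∈ B) ∧
  (∀ B ∈ π, ∀ B' ∈ π, (B ∩ B').Nonempty → B = B')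

/-- The partition is non-crossing. -/
def Noncrossing {m : ℕ} (π : Set (Set (Fin m))) : Prop :=
  ∀ B ∈ π, ∀ B' ∈ π, B ≠ B' →
    ¬ ∃ k1 l1 k2 l2 : Fin m, k1 < l1 ∧ l1 < k2 ∧ k2 < l2 ∧
      k1 ∈ B ∧ k2 ∈ B ∧ l1 ∈ B' ∧ l2 ∈ B'

/-- `B` is an inner block of `B'`. -/
def Inner {m : ℕ} (B B' : Set (Fin m)) : Prop :=
  (∃ p ∈ B', ∀ b ∈ B, p < b) ∧ (∃ q ∈ B', ∀ b ∈ B, b < q)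

/-- `B` is a direct inner block of `B''` in π. -/
def DirectInner {m : ℕ} (π : Set (Set (Fin m))) (B B'' : Set (Fin m)) : Prop :=
  Inner B B'' ∧ ¬ ∃ B' ∈ π, Inner B B' ∧ Inner B' B''

/-- Non-crossing partitions with blocks of size 1 or 2, each singleton inner to a 2-block. -/
def NC1lt2 (m : ℕ) : Set (Set (Set (Fin m))) :=
  {π | IsPartitionOn π ∧ Noncrossing π ∧ (∀ B ∈ π, B.ncard = 1 ∨ B.ncard = 2) ∧
    ∀ B ∈ π, B.ncard = 1 → ∃ B' ∈ π, B'.ncard = 2 ∧ Inner B B'}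

/-- Non-crossing partitions all of whose blocks have size at least two. -/
def NCge2 (m : ℕ) : Set (Set (Set (Fin m))) :=
  {π | IsPartitionOn π ∧ Noncrossing π ∧ ∀ B ∈ π, 2 ≤ B.ncard}

/-- The merging map `F`: each 2-block is merged with its direct inner singletons. -/
def Fmap {m : ℕ} (π : Set (Set (Fin m))) : Set (Set (Fin m)) :=
  {C | ∃ B ∈ π, B.ncard = 2 ∧
    C = B ∪ {x | ∃ S ∈ π, S = {x} ∧ DirectInner π S B}}

/-- The splitting map `G`: from each block of size at least 3, every element except the
minimum and the maximum is placed in its own singleton block. -/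
def Gmap {m : ℕ} (π : Set (Set (Fin m))) : Set (Set (Fin m)) :=
  {C | (∃ B ∈ π, B.ncard ≤ 2 ∧ C = B) ∨
    (∃ B ∈ π, 3 ≤ B.ncard ∧ ∃ x ∈ B, (∃ y ∈ B, y < x) ∧ (∃ z ∈ B, x < z) ∧ C = {x}) ∨
    (∃ B ∈ π, 3 ≤ B.ncard ∧ ∃ y ∈ B, ∃ z ∈ B,
      (∀ b ∈ B, y ≤ b) ∧ (∀ b ∈ B, b ≤ z) ∧ C = {y, z})}

/-- Minimal number of transpositions needed to write σ as a product. -/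
noncomputable def permLength {β : Type*} [DecidableEq β] [Fintype β] (σ : Equiv.Perm β) : ℕ :=
  sInf {k | ∃ l : List (Equiv.Perm β), l.length = k ∧ (∀ t ∈ l, t.IsSwap) ∧ l.prod = σ}

/-- The element 2n+1 of {1,…,2n+1}. -/
def jmTop (n : ℕ) : Fin (2*n+1) := Fin.last (2*n)

/-- The tuple of Jucys-Murphy transpositions (αᵢ, 2n+1). -/
def jmTuple {n m : ℕ} (α : Fin m → Fin (2*n+1)) : Fin m → Equiv.Perm (Fin (2*n+1)) :=
  fun i => Equiv.swap (α i) (jmTop n)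

/-- The partition of indices grouping equal values of α. -/
def eqPartition {m : ℕ} {β : Type*} (α : Fin m → β) : Set (Set (Fin m)) :=
  {B | ∃ j : Fin m, B = {i | α i = α j}}

/-- A partition respects a two-coloring. -/
def Respects {m : ℕ} (π : Set (Set (Fin m))) (c : Fin m → Bool) : Prop :=
  ∀ B ∈ π, ∀ i ∈ B, ∀ j ∈ B, c i = c j

/-- Membership in the subgroup S_n × S_n × {e} of S_{2n+1}. -/
def InH (n : ℕ) (σ : Equiv.Perm (Fin (2*n+1))) : Prop :=
  (∀ x : Fin (2*n+1), (x:ℕ) < n → ((σ x : Fin (2*n+1)) : ℕ) < n) ∧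
  (∀ x : Fin (2*n+1), n ≤ (x:ℕ) → (x:ℕ) < 2*n →
    n ≤ ((σ x : Fin (2*n+1)) : ℕ) ∧ ((σ x : Fin (2*n+1)) : ℕ) < 2*n) ∧
  σ (jmTop n) = jmTop n

def e1 (n : ℕ) : Fin n ≃ {x : Fin (2*n+1) // (x:ℕ) < n} where
  toFun i := ⟨⟨i, by omega⟩, i.isLt⟩
  invFun x := ⟨(x.1 : ℕ), x.2⟩
  left_inv i := rfl
  right_inv x := rfl

def e2 (n : ℕ) : Fin n ≃ {x : Fin (2*n+1) // n ≤ (x:ℕ) ∧ (x:ℕ) < 2*n} where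
  toFun i := ⟨⟨n + i, by omega⟩, by simp only [Fin.val_mk]; omega⟩
  invFun x := ⟨(x.1 : ℕ) - n, by have := x.2; omega⟩
  left_inv i := by ext; simp
  right_inv x := by
    rcases x with ⟨x, hx⟩
    exact Subtype.ext (Fin.ext (by simp; omega))

/-- Embed a permutation of `Fin n` as a permutation of `Fin (2n+1)` acting on {1,…,n}. -/
def lift1 {n : ℕ} (τ : Equiv.Perm (Fin n)) : Equiv.Perm (Fin (2*n+1)) :=
  τ.extendDomain (e1 n)

/-- Embed a permutation of `Fin n` as a permutation of `Fin (2n+1)` acting on {n+1,…,2n}. -/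
def lift2 {n : ℕ} (τ : Equiv.Perm (Fin n)) : Equiv.Perm (Fin (2*n+1)) :=
  τ.extendDomain (e2 n)

section Helpers

lemma segA {X : Type*} [DecidableEq X] (t : X) (l : List X) (v : X) (hv : v ≠ t)
    (hl : ∀ c ∈ l, c ≠ v) :
    ((l.map (fun c => Equiv.swap c t)).prod) v = v := by
  induction l with
  | nil => simp
  | cons a l ih =>
    simp only [List.map_cons, List.prod_cons, Equiv.Perm.mul_apply]
    rw [ih (fun c hc => hl c (List.mem_cons_of_mem _ hc)),
      Equiv.swap_apply_of_ne_of_ne (Ne.symm (hl a List.mem_cons_self)) hv]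

lemma seg {X : Type*} [DecidableEq X] (t : X) (k : ℕ) (β : Fin (k+2) → X)
    (h0t : β 0 ≠ t) (hlast : β (Fin.last (k+1)) = β 0)
    (hmid : ∀ i : Fin (k+2), i ≠ 0 → i ≠ Fin.last (k+1) → β i ≠ β 0) :
    ((List.ofFn (fun i => Equiv.swap (β i) t)).prod) t = t := by
  rw [List.ofFn_succ]
  have htail : (List.ofFn (fun i : Fin (k+1) => Equiv.swap (β i.succ) t))
      = ((List.ofFn (fun i : Fin k => β i.castSucc.succ)).map
          (fun c => Equiv.swap c t)).concat (Equiv.swap (β (Fin.last (k+1))) t) := by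
    rw [List.ofFn_succ' (f := fun i : Fin (k+1) => Equiv.swap (β i.succ) t), List.map_ofFn]
    rfl
  rw [htail]
  simp only [List.prod_cons, List.concat_eq_append, List.prod_append, List.prod_cons,
    List.prod_nil, mul_one, Equiv.Perm.mul_apply, Equiv.swap_apply_right]
  rw [hlast]
  rw [segA t _ (β 0) h0t ?_, Equiv.swap_apply_left]
  intro c hc
  rw [List.mem_ofFn] at hc
  obtain ⟨i, rfl⟩ := hc
  refine hmid _ (Fin.succ_ne_zero _) ?_
  intro h
  have h2 : i.castSucc.succ.val = k + 1 := by rw [h]; rfl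
  simp only [Fin.val_succ, Fin.coe_castSucc] at h2
  have := i.isLt
  omega

lemma ofFn_cast {X : Type*} {a b : ℕ} (h : b = a) (f : Fin a → X) :
    List.ofFn (fun i : Fin b => f (Fin.cast h i)) = List.ofFn f := by
  subst h; rfl

variable {m : ℕ} {X : Type*} (α : Fin m → X)

lemma noncrossing_forward (hnc : Noncrossing (eqPartition α)) :
    ∀ ⦃k1 l1 k2 l2 : Fin m⦄, k1 < l1 → l1 < k2 → k2 < l2 →
      α k1 = α k2 → α l1 = α l2 → α k1 = α l1 := by
  intro k1 l1 k2 l2 h1 h2 h3 hk hl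
  by_contra hne
  refine hnc {i | α i = α k1} ⟨k1, rfl⟩ {i | α i = α l1} ⟨l1, rfl⟩ ?_
    ⟨k1, l1, k2, l2, h1, h2, h3, rfl, hk.symm, rfl, hl.symm⟩
  intro h
  have : k1 ∈ {i | α i = α l1} := h ▸ (rfl : α k1 = α k1)
  exact hne this

lemma noncrossing_backward
    (h : ∀ ⦃k1 l1 k2 l2 : Fin m⦄, k1 < l1 → l1 < k2 → k2 < l2 →
      α k1 = α k2 → α l1 = α l2 → α k1 = α l1) :
    Noncrossing (eqPartition α) := by
  rintro B ⟨j1, rfl⟩ B' ⟨j2, rfl⟩ hne ⟨k1, l1, k2, l2, h1, h2, h3, hk1, hk2, hl1, hl2⟩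
  apply hne
  have hval : α k1 = α l1 := h h1 h2 h3 (hk1.trans hk2.symm) (hl1.trans hl2.symm)
  ext i
  simp only [Set.mem_setOf_eq]
  rw [← hk1, ← hl1, hval]

lemma atMostTwo_of_hsize
    (hsize : ∀ B ∈ eqPartition α, B.ncard = 1 ∨ B.ncard = 2) :
    ∀ i₁ i₂ i₃ : Fin m, α i₁ = α i₂ → α i₂ = α i₃ → i₁ = i₂ ∨ i₁ = i₃ ∨ i₂ = i₃ := by
  intro i₁ i₂ i₃ h12 h23
  rcases hsize {i | α i = α i₁} ⟨i₁, rfl⟩ with h | h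
  · obtain ⟨a, ha⟩ := Set.ncard_eq_one.mp h
    have e1 : i₁ ∈ {i | α i = α i₁} := rfl
    have e2 : i₂ ∈ {i | α i = α i₁} := h12.symm
    rw [ha] at e1 e2
    left; rw [e1, e2]
  · obtain ⟨a, b, hab, hset⟩ := Set.ncard_eq_two.mp h
    have e1 : i₁ ∈ {i | α i = α i₁} := rfl
    have e2 : i₂ ∈ {i | α i = α i₁} := h12.symm
    have e3 : i₃ ∈ {i | α i = α i₁} := (h12.trans h23).symm
    rw [hset] at e1 e2 e3
    simp only [Set.mem_insert_iff, Set.mem_singleton_iff] at e1 e2 e3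
    rcases e1 with rfl | rfl <;> rcases e2 with rfl | rfl <;> rcases e3 with rfl | rfl <;> tauto

lemma hsize_of_atMostTwo
    (h : ∀ i₁ i₂ i₃ : Fin m, α i₁ = α i₂ → α i₂ = α i₃ → i₁ = i₂ ∨ i₁ = i₃ ∨ i₂ = i₃) :
    ∀ B ∈ eqPartition α, B.ncard = 1 ∨ B.ncard = 2 := by
  rintro B ⟨j, rfl⟩
  by_cases hk : ∃ k, k ≠ j ∧ α k = α j
  · obtain ⟨k, hkj, hk⟩ := hk
    right
    have hset : {i | α i = α j} = {j, k} := by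
      ext i
      simp only [Set.mem_setOf_eq, Set.mem_insert_iff, Set.mem_singleton_iff]
      constructor
      · intro hi
        rcases h i j k hi hk.symm with h' | h' | h'
        · exact Or.inl h'
        · exact Or.inr h'
        · exact absurd h'.symm hkj
      · rintro (rfl | rfl)
        · rfl
        · exact hk
    rw [hset]
    exact Set.ncard_pair (Ne.symm hkj)
  · left
    push_neg at hk
    have hset : {i | α i = α j} = {j} := by
      ext i
      simp only [Set.mem_setOf_eq, Set.mem_singleton_iff]
      exact ⟨fun hi => by_contra fun hne => hk i hne hi, fun h => h ▸ rfl⟩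
    rw [hset]
    exact Set.ncard_singleton j

lemma fiber_structure
    (hsize : ∀ B ∈ eqPartition α, B.ncard = 1 ∨ B.ncard = 2) (j : Fin m) :
    ({i : Fin m | α i = α j} = {j}) ∨
    (∃ k, k ≠ j ∧ α k = α j ∧ ∀ i, α i = α j → i = j ∨ i = k) := by
  rcases hsize {i | α i = α j} ⟨j, rfl⟩ with h | h
  · left
    obtain ⟨a, ha⟩ := Set.ncard_eq_one.mp h
    have hj : j ∈ {i : Fin m | α i = α j} := rfl
    rw [ha] at hj
    rw [ha, hj]
  · right
    obtain ⟨a, b, hab, hset⟩ := Set.ncard_eq_two.mp h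
    have hj : j ∈ {i : Fin m | α i = α j} := rfl
    rw [hset] at hj
    have hmem : ∀ i, α i = α j → i ∈ ({a, b} : Set (Fin m)) := fun i hi => hset ▸ hi
    have hain : α a = α j := by
      have : a ∈ {i : Fin m | α i = α j} := by rw [hset]; exact Or.inl rfl
      exact this
    have hbin : α b = α j := by
      have : b ∈ {i : Fin m | α i = α j} := by rw [hset]; exact Or.inr rfl
      exact this
    rcases hj with rfl | rfl
    · refine ⟨b, hab.symm, hbin, fun i hi => ?_⟩
      rcases hmem i hi with h' | h'
      · exact Or.inl h'
      · exact Or.inr h'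
    · refine ⟨a, hab, hain, fun i hi => ?_⟩
      rcases hmem i hi with h' | h'
      · exact Or.inr h'
      · exact Or.inl h'

end Helpers

/-- if every singleton block is inner to a two-element block, then 2n+1 is
a fixed point of the product. -/
theorem top_fixed (n m : ℕ) (α : Fin m → Fin (2*n+1))
    (hα : ∀ i, α i ≠ jmTop n)
    (hnc : Noncrossing (eqPartition α))
    (hsize : ∀ B ∈ eqPartition α, B.ncard = 1 ∨ B.ncard = 2)
    (hinner : ∀ B ∈ eqPartition α, B.ncard = 1 →
      ∃ B' ∈ eqPartition α, B'.ncard = 2 ∧ Inner B B') :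
    ((List.ofFn (jmTuple α)).prod) (jmTop n) = jmTop n := by

  induction m using Nat.strong_induction_on with
  | _ m ih =>
  match m, α, hα, hnc, hsize, hinner with
  | 0, α, hα, hnc, hsize, hinner => simp
  | (mm+1), α, hα, hnc, hsize, hinner =>
  set lst : Fin (mm+1) := Fin.last mm with hlst
  rcases fiber_structure α hsize lst with hsing | ⟨j, hjne, hαj, hfib⟩
  · exfalso
    obtain ⟨B', hB', hB2, hInner⟩ := hinner {i | α i = α lst} ⟨lst, rfl⟩
      (by rw [hsing]; exact Set.ncard_singleton _)
    obtain ⟨-, ⟨q, hq, hqgt⟩⟩ := hInner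
    exact absurd (hqgt lst rfl) (not_lt.mpr (Fin.le_last q))
  · have hjlt : j < lst := lt_of_le_of_ne (Fin.le_last j) hjne
    have hjvm : j.val < mm := hjlt
    have K3 : ∀ i i' : Fin (mm+1), α i = α i' → i.val < j.val → i'.val < j.val := by
      intro i i' hii hi
      by_contra hge
      push_neg at hge
      have hine : α i ≠ α lst := by
        intro h
        rcases hfib i h with h' | h'
        · have hv : i.val = mm := by rw [h', hlst, Fin.val_last]
          omega
        · have hv : i.val = j.val := congrArg Fin.val h'
          omega
      have hi'j : i' ≠ j := by
        rintro rfl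
        exact hine (hii.trans hαj)
      have hi'l : i' ≠ lst := by
        rintro rfl
        exact hine hii
      have h1 : i < j := hi
      have h2 : j < i' := by
        have : j.val ≠ i'.val := fun h => hi'j (Fin.ext h.symm)
        show j.val < i'.val
        omega
      have h3 : i' < lst := by
        have hle : i'.val ≤ mm := Nat.lt_succ_iff.mp i'.isLt
        have : i'.val ≠ mm := fun h => hi'l (Fin.ext h)
        show i'.val < mm
        omega
      exact hine ((noncrossing_forward α hnc h1 h2 h3 hii hαj).trans hαj)
    have K2 : ∀ i : Fin (mm+1), j.val < i.val → i.val < mm → α i ≠ α j := by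
      intro i h1 h2 h
      rcases hfib i (h.trans hαj) with h' | h'
      · have hv : i.val = mm := by rw [h', hlst, Fin.val_last]
        omega
      · have hv : i.val = j.val := congrArg Fin.val h'
        omega
    set s := mm - j.val - 1 with hs
    have hm : mm + 1 = j.val + (s+2) := by omega
    set emb : Fin j.val → Fin (mm+1) :=
      fun i => Fin.cast hm.symm (Fin.castAdd (s+2) i) with hemb
    have hembv : ∀ i : Fin j.val, (emb i).val = i.val := fun _ => rfl
    have hembinj : Function.Injective emb := by
      intro a b h
      have h2 : (emb a).val = (emb b).val := congrArg Fin.val h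
      rw [hembv, hembv] at h2
      exact Fin.ext h2
    set α' : Fin j.val → Fin (2*n+1) := fun i => α (emb i) with hα'def
    have hsplit : List.ofFn (jmTuple α)
        = (List.ofFn fun i : Fin j.val => jmTuple α (emb i))
          ++ List.ofFn fun i : Fin (s+2) => jmTuple α (Fin.cast hm.symm (Fin.natAdd j.val i)) := by
      rw [← ofFn_cast hm.symm (jmTuple α), List.ofFn_add]
      rfl
    rw [hsplit, List.prod_append, Equiv.Perm.mul_apply]
    have e0 : Fin.cast hm.symm (Fin.natAdd j.val (0 : Fin (s+2))) = j := by
      apply Fin.ext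
      simp
    have elast : Fin.cast hm.symm (Fin.natAdd j.val (Fin.last (s+1))) = lst := by
      apply Fin.ext
      show j.val + (s+1) = mm
      omega
    have hsuffix : (List.ofFn fun i : Fin (s+2) =>
        jmTuple α (Fin.cast hm.symm (Fin.natAdd j.val i))).prod (jmTop n) = jmTop n := by
      refine seg (jmTop n) s (fun i => α (Fin.cast hm.symm (Fin.natAdd j.val i)))
        (hα _) ?_ ?_
      · show α (Fin.cast hm.symm (Fin.natAdd j.val (Fin.last (s+1))))
          = α (Fin.cast hm.symm (Fin.natAdd j.val (0 : Fin (s+2))))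
        rw [e0, elast]
        exact hαj.symm
      · intro i hi0 hilast
        show α (Fin.cast hm.symm (Fin.natAdd j.val i))
          ≠ α (Fin.cast hm.symm (Fin.natAdd j.val (0 : Fin (s+2))))
        rw [e0]
        have hiv0 : 0 < i.val := Fin.pos_iff_ne_zero.mpr hi0
        have hivlast : i.val < s + 1 := by
          have hle : i.val ≤ s + 1 := Nat.lt_succ_iff.mp i.isLt
          have : i.val ≠ s + 1 := fun h => hilast (Fin.ext h)
          omega
        refine K2 _ ?_ ?_
        · show j.val < j.val + i.val
          omega
        · show j.val + i.val < mm
          omega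
    rw [hsuffix]
    have hα' : ∀ i, α' i ≠ jmTop n := fun i => hα _
    have hnc' : Noncrossing (eqPartition α') := by
      apply noncrossing_backward
      intro k1 l1 k2 l2 h1 h2 h3 hk hl
      exact noncrossing_forward α hnc h1 h2 h3 hk hl
    have hsize' : ∀ B ∈ eqPartition α', B.ncard = 1 ∨ B.ncard = 2 := by
      apply hsize_of_atMostTwo
      intro i₁ i₂ i₃ h12 h23
      rcases atMostTwo_of_hsize α hsize (emb i₁) (emb i₂) (emb i₃) h12 h23 with h | h | h
      · exact Or.inl (hembinj h)
      · exact Or.inr (Or.inl (hembinj h))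
      · exact Or.inr (Or.inr (hembinj h))
    have hinner' : ∀ B ∈ eqPartition α', B.ncard = 1 →
        ∃ B' ∈ eqPartition α', B'.ncard = 2 ∧ Inner B B' := by
      rintro B ⟨j₀, rfl⟩ hB1
      have hBj : {i : Fin j.val | α' i = α' j₀} = {j₀} := by
        obtain ⟨a, ha⟩ := Set.ncard_eq_one.mp hB1
        have hj₀ : j₀ ∈ {i : Fin j.val | α' i = α' j₀} := rfl
        rw [ha] at hj₀
        rw [ha, hj₀]
      have hFull : {i : Fin (mm+1) | α i = α (emb j₀)} = {emb j₀} := by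
        ext i
        simp only [Set.mem_setOf_eq, Set.mem_singleton_iff]
        constructor
        · intro hi
          have hiv : i.val < j.val := K3 (emb j₀) i hi.symm j₀.isLt
          have hmem : (⟨i.val, hiv⟩ : Fin j.val) ∈ {i : Fin j.val | α' i = α' j₀} := hi
          rw [hBj] at hmem
          exact congrArg emb hmem
        · rintro rfl; rfl
      have h1 : {i : Fin (mm+1) | α i = α (emb j₀)}.ncard = 1 := by
        rw [hFull]; exact Set.ncard_singleton _
      obtain ⟨B₂, ⟨w, rfl⟩, hB₂2, ⟨⟨p, hp, hplt⟩, ⟨q, hq, hqgt⟩⟩⟩ :=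
        hinner _ ⟨emb j₀, rfl⟩ h1
      have hpj : p < emb j₀ := hplt _ rfl
      have hqj : emb j₀ < q := hqgt _ rfl
      have hpv : p.val < j.val := lt_trans hpj j₀.isLt
      have hsub : ∀ e : Fin (mm+1), α e = α w → e.val < j.val := by
        intro e he
        exact K3 p e (hp.trans he.symm) hpv
      have hqv : q.val < j.val := hsub q hq
      have hwv : w.val < j.val := hsub w rfl
      refine ⟨{i : Fin j.val | α' i = α' ⟨w.val, hwv⟩}, ⟨⟨w.val, hwv⟩, rfl⟩, ?_, ?_, ?_⟩
      · have himg : {i : Fin (mm+1) | α i = α w}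
            = emb '' {i : Fin j.val | α' i = α' ⟨w.val, hwv⟩} := by
          ext i
          simp only [Set.mem_setOf_eq, Set.mem_image]
          constructor
          · intro hi
            exact ⟨⟨i.val, hsub i hi⟩, hi, Fin.ext rfl⟩
          · rintro ⟨i₀, hi₀, rfl⟩
            exact hi₀
        rw [himg, Set.ncard_image_of_injective _ hembinj] at hB₂2
        exact hB₂2
      · refine ⟨⟨p.val, hpv⟩, hp, ?_⟩
        intro b hb
        rw [hBj] at hb
        rw [hb]
        exact hpj
      · refine ⟨⟨q.val, hqv⟩, hq, ?_⟩
        intro b hb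
        rw [hBj] at hb
        rw [hb]
        exact hqj
    exact ih j.val (by omega) α' hα' hnc' hsize' hinner'


end JM
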